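/- Convergence of entropy under mollification: with h₀, U₀, and the mollifications h₀^ε, U₀^ε as above, lim_{ε→0} Λ(h₀^ε, U₀^ε) = Λ(h₀, U₀), provided Λ(h₀,U₀) < ∞. (The key points are Λ(h₀^ε,U₀^ε) ≤ Λ(h₀,U₀) combined with the weak-* convergence h₀^ε → h₀, U₀^ε → U₀ and lower semicontinuity of Λ.) -/

import Mathlib

open MeasureTheory
noncomputable section

/-- The 3-torus `𝕋³ = ℝ³/ℤ³`. -/
abbrev T3 : Type := UnitAddCircle × UnitAddCircle × UnitAddCircle

/-- Pairing of a signed (Borel) measure with a function, `∫ f ds`. -/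
def pairSM {α : Type*} [MeasurableSpace α] (s : SignedMeasure α) (f : α → ℝ) : ℝ :=
  ∫ x, f x ∂s.toJordanDecomposition.posPart - ∫ x, f x ∂s.toJordanDecomposition.negPart

/-- The entropy functional `Λ`, defined by duality from abstract pairings
`Ph : C(𝕋³,ℝ)' ` and `PU : C(𝕋³,ℝ⁴)'`:
`Λ = sup { ⟨Ph, a⟩ + ⟨PU, A⟩ : (a,A) continuous, a + |A|²/2 ≤ 0 }`. -/
def LamGen (Ph : (T3 → ℝ) → ℝ) (PU : Fin 4 → (T3 → ℝ) → ℝ) : EReal :=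
  sSup { r : EReal | ∃ (a : C(T3, ℝ)) (A : Fin 4 → C(T3, ℝ)),
    (∀ x, a x + (∑ i, (A i x)^2) / 2 ≤ 0) ∧
    r = ((Ph ⇑a + ∑ i, PU i ⇑(A i) : ℝ) : EReal) }

/-- `Λ(ρ,U)` for a (nonnegative) Borel measure `ρ` and an `ℝ⁴`-valued Borel
measure `U` (given componentwise as signed measures) on the 3-torus. -/
def Lam (ρ : Measure T3) (U : Fin 4 → SignedMeasure T3) : EReal :=
  LamGen (fun f => ∫ x, f x ∂ρ) (fun i f => pairSM (U i) f)


instance : MeasurableAdd₂ (UnitAddCircle × UnitAddCircle) :=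
  ContinuousAdd.measurableMul₂ (γ := UnitAddCircle × UnitAddCircle)
instance : MeasurableAdd (UnitAddCircle × UnitAddCircle) := MeasurableAdd₂.toMeasurableAdd
instance : MeasurableSub₂ T3 := ContinuousSub.measurableSub₂
instance : MeasurableAdd₂ T3 := ContinuousAdd.measurableMul₂ (γ := T3)
instance : MeasurableAdd T3 := MeasurableAdd₂.toMeasurableAdd
instance : BorelSpace (T3 × T3) := Prod.borelSpace
instance : Measure.IsAddRightInvariant (volume : Measure (UnitAddCircle × UnitAddCircle)) :=
  inferInstanceAs (Measure.IsAddRightInvariant ((volume : Measure UnitAddCircle).prod volume))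
instance : Measure.IsAddRightInvariant (volume : Measure T3) :=
  inferInstanceAs (Measure.IsAddRightInvariant ((volume : Measure UnitAddCircle).prod volume))

lemma myIntg {g : T3 → ℝ} (hg : Continuous g) (μ : Measure T3) [IsFiniteMeasure μ] :
    Integrable g μ :=
  hg.integrable_of_hasCompactSupport (HasCompactSupport.of_compactSpace g)

lemma contParam (K : C(T3 × T3, ℝ)) (μ : Measure T3) [IsFiniteMeasure μ] :
    Continuous fun x => ∫ y, K (x, y) ∂μ := by
  apply continuous_of_dominated (bound := fun _ => ‖K‖)
  · intro x; exact (K.continuous.comp (Continuous.prodMk_right x)).aestronglyMeasurable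
  · intro x; filter_upwards with y; exact K.norm_coe_le_norm (x, y)
  · exact integrable_const _
  · filter_upwards with y
    exact K.continuous.comp (continuous_id.prodMk continuous_const)

/-- Mollification of a continuous function. -/
def mollC (ρ f : C(T3, ℝ)) : C(T3, ℝ) :=
  ⟨fun y => ∫ x, f x * ρ (x - y),
   contParam ⟨fun p => f p.2 * ρ (p.2 - p.1),
     (f.continuous.comp continuous_snd).mul
       (ρ.continuous.comp (continuous_snd.sub continuous_fst))⟩ volume⟩

lemma contMollKer (ρ : C(T3, ℝ)) (μ : Measure T3) [IsFiniteMeasure μ] :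
    Continuous fun x : T3 => ∫ y, ρ (x - y) ∂μ :=
  contParam ⟨fun p => ρ (p.1 - p.2),
    ρ.continuous.comp (continuous_fst.sub continuous_snd)⟩ μ

lemma moll_pair (ρ f : C(T3, ℝ)) (μ : Measure T3) [IsFiniteMeasure μ] :
    ∫ x, f x * ∫ y, ρ (x - y) ∂μ = ∫ y, mollC ρ f y ∂μ := by
  have h1 : ∀ x : T3, f x * ∫ y, ρ (x - y) ∂μ = ∫ y, f x * ρ (x - y) ∂μ :=
    fun x => (integral_const_mul _ _).symm
  have hcont : Continuous (Function.uncurry fun x y : T3 => f x * ρ (x - y)) :=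
    (f.continuous.comp continuous_fst).mul
      (ρ.continuous.comp (continuous_fst.sub continuous_snd))
  have hint : Integrable (Function.uncurry fun x y : T3 => f x * ρ (x - y))
      ((volume : Measure T3).prod μ) :=
    hcont.integrable_of_hasCompactSupport (HasCompactSupport.of_compactSpace _)
  simp_rw [h1]
  exact integral_integral_swap hint

lemma moll_pairSM (ρ f : C(T3, ℝ)) (s : SignedMeasure T3) :
    ∫ x, f x * pairSM s (fun y => ρ (x - y)) = pairSM s ⇑(mollC ρ f) := by
  unfold pairSM
  have h1 : ∀ x : T3, f x * ((∫ y, ρ (x - y) ∂s.toJordanDecomposition.posPart) -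
      (∫ y, ρ (x - y) ∂s.toJordanDecomposition.negPart)) =
      f x * (∫ y, ρ (x - y) ∂s.toJordanDecomposition.posPart) -
      f x * (∫ y, ρ (x - y) ∂s.toJordanDecomposition.negPart) := fun x => mul_sub _ _ _
  simp_rw [h1]
  rw [integral_sub
      (myIntg (g := fun x => f x * ∫ y, ρ (x - y) ∂s.toJordanDecomposition.posPart) (f.continuous.mul (contMollKer ρ _)) volume)
      (myIntg (g := fun x => f x * ∫ y, ρ (x - y) ∂s.toJordanDecomposition.negPart) (f.continuous.mul (contMollKer ρ _)) volume),
    moll_pair, moll_pair]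

lemma sq_int_le (g ρy : T3 → ℝ) (hg : Continuous g) (hρ : Continuous ρy)
    (hρ0 : ∀ x, 0 ≤ ρy x) (hm : ∫ x, ρy x = 1) :
    (∫ x, g x * ρy x) ^ 2 ≤ ∫ x, (g x) ^ 2 * ρy x := by
  set m := ∫ x, g x * ρy x with hmdef
  have h0 : 0 ≤ ∫ x, (g x - m) ^ 2 * ρy x :=
    integral_nonneg fun x => mul_nonneg (sq_nonneg _) (hρ0 x)
  have hpt : ∀ x : T3, (g x - m) ^ 2 * ρy x =
      (g x) ^ 2 * ρy x - (2 * m) * (g x * ρy x) + m ^ 2 * ρy x := fun x => by ring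
  have hexp : ∫ x, (g x - m) ^ 2 * ρy x = (∫ x, (g x) ^ 2 * ρy x) - 2 * m * m + m ^ 2 := by
    have i1 : Integrable (fun x : T3 => g x ^ 2 * ρy x) volume :=
      myIntg ((hg.pow 2).mul hρ) volume
    have i2 : Integrable (fun x : T3 => 2 * m * (g x * ρy x)) volume :=
      myIntg (continuous_const.mul (hg.mul hρ)) volume
    have i3 : Integrable (fun x : T3 => m ^ 2 * ρy x) volume :=
      myIntg (continuous_const.mul hρ) volume
    have i12 : Integrable (fun x : T3 => g x ^ 2 * ρy x - 2 * m * (g x * ρy x)) volume :=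
      i1.sub i2
    simp_rw [hpt]
    rw [integral_add i12 i3, integral_sub i1 i2,
      integral_const_mul, integral_const_mul, hm, ← hmdef]
    ring
  nlinarith [h0, hexp]

lemma moll_adm (ρ : C(T3, ℝ)) (hρ0 : ∀ x, 0 ≤ ρ x) (hm : ∫ x, ρ x = 1)
    (a : C(T3, ℝ)) (A : Fin 4 → C(T3, ℝ))
    (hadm : ∀ x, a x + (∑ i, (A i x) ^ 2) / 2 ≤ 0) :
    ∀ y, mollC ρ a y + (∑ i, (mollC ρ (A i) y) ^ 2) / 2 ≤ 0 := by
  intro y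
  have hm1 : ∫ x, ρ (x - y) = 1 := by
    rw [integral_sub_right_eq_self (fun x => ρ x) y]; exact hm
  have hρc : Continuous fun x : T3 => ρ (x - y) :=
    ρ.continuous.comp (continuous_id.sub continuous_const)
  have hρ0' : ∀ x : T3, 0 ≤ ρ (x - y) := fun x => hρ0 _
  have hCS : ∀ i : Fin 4, (mollC ρ (A i) y) ^ 2 ≤ ∫ x, (A i x) ^ 2 * ρ (x - y) :=
    fun i => sq_int_le (A i) _ (A i).continuous hρc hρ0' hm1
  have hsum : (∑ i, (mollC ρ (A i) y) ^ 2) ≤ ∑ i, ∫ x, (A i x) ^ 2 * ρ (x - y) :=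
    Finset.sum_le_sum fun i _ => hCS i
  have hintsum : ∑ i : Fin 4, ∫ x, (A i x) ^ 2 * ρ (x - y) =
      ∫ x, (∑ i : Fin 4, (A i x) ^ 2) * ρ (x - y) := by
    rw [← integral_finset_sum]
    · simp_rw [Finset.sum_mul]
    · exact fun i _ => myIntg (((A i).continuous.pow 2).mul hρc) volume
  have hkey : mollC ρ a y + (∑ i, (mollC ρ (A i) y) ^ 2) / 2 ≤
      ∫ x, (a x + (∑ i, (A i x) ^ 2) / 2) * ρ (x - y) := by
    have heq : ∫ x, (a x + (∑ i, (A i x) ^ 2) / 2) * ρ (x - y) =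
        (∫ x, a x * ρ (x - y)) + (∫ x, (∑ i : Fin 4, (A i x) ^ 2) * ρ (x - y)) / 2 := by
      have hpt : ∀ x : T3, (a x + (∑ i, (A i x) ^ 2) / 2) * ρ (x - y) =
          a x * ρ (x - y) + ((∑ i, (A i x) ^ 2) * ρ (x - y)) / 2 := fun x => by ring
      simp_rw [hpt]
      rw [integral_add (myIntg (g := fun x => a x * ρ (x - y)) (a.continuous.mul hρc) volume)
          (Integrable.div_const (myIntg (g := fun x => (∑ i, (A i x) ^ 2) * ρ (x - y)) ((continuous_finset_sum _ fun i _ =>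
            (A i).continuous.pow 2).mul hρc) volume) 2), integral_div]
    rw [heq]
    have : (∑ i, (mollC ρ (A i) y) ^ 2) / 2 ≤
        (∫ x, (∑ i : Fin 4, (A i x) ^ 2) * ρ (x - y)) / 2 := by
      rw [← hintsum]; linarith
    exact add_le_add_right this _
  refine hkey.trans (integral_nonpos fun x => ?_)
  exact mul_nonpos_of_nonpos_of_nonneg (hadm x) (hρ0' x)

/-- convergence of the entropy under mollification:
`Λ(h₀^ε, U₀^ε) → Λ(h₀,U₀)` as `ε → 0⁺`, provided `Λ(h₀,U₀) < ∞`.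
Here `ρK ε` is, for each `ε ∈ (0,1)`, a positive probability kernel on `𝕋³`
(e.g. the periodized Gaussian), and the mollified measures are assumed to
converge weakly-* to `(h₀,U₀)` as `ε → 0⁺` (which holds for the periodized
Gaussian mollifier). -/
theorem lam_mollify_tendsto (h0 : Measure T3) [IsFiniteMeasure h0]
    (U0 : Fin 4 → SignedMeasure T3)
    (ρK : ℝ → C(T3, ℝ))
    (hpos : ∀ ε ∈ Set.Ioo (0:ℝ) 1, ∀ x, 0 < ρK ε x)
    (hmass : ∀ ε ∈ Set.Ioo (0:ℝ) 1, ∫ x, ρK ε x = 1)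
    (hconvh : ∀ f : C(T3, ℝ),
      Filter.Tendsto (fun ε => ∫ x, f x * (∫ y, ρK ε (x - y) ∂h0))
        (nhdsWithin 0 (Set.Ioi 0)) (nhds (∫ x, f x ∂h0)))
    (hconvU : ∀ (i : Fin 4) (f : C(T3, ℝ)),
      Filter.Tendsto (fun ε => ∫ x, f x * pairSM (U0 i) (fun y => ρK ε (x - y)))
        (nhdsWithin 0 (Set.Ioi 0)) (nhds (pairSM (U0 i) ⇑f)))
    (hfin : Lam h0 U0 ≠ (⊤ : EReal)) :
    Filter.Tendsto
      (fun ε => LamGen (fun f => ∫ x, f x * (∫ y, ρK ε (x - y) ∂h0))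
        (fun i f => ∫ x, f x * pairSM (U0 i) (fun y => ρK ε (x - y))))
      (nhdsWithin 0 (Set.Ioi 0)) (nhds (Lam h0 U0)) := by
  have hL : Lam h0 U0 = sSup { r : EReal | ∃ (a : C(T3, ℝ)) (A : Fin 4 → C(T3, ℝ)),
      (∀ x, a x + (∑ i, (A i x)^2) / 2 ≤ 0) ∧
      r = (((∫ x, a x ∂h0) + ∑ i, pairSM (U0 i) ⇑(A i) : ℝ) : EReal) } := rfl
  refine tendsto_order.2 ⟨?_, ?_⟩
  · -- lower bound: liminf ≥ Lam, via weak-* convergence of pairings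
    intro b hb
    rw [hL] at hb
    obtain ⟨r, hrS, hbr⟩ := lt_sSup_iff.mp hb
    obtain ⟨a, A, hadm, rfl⟩ := hrS
    have conv : Filter.Tendsto
        (fun ε => ((∫ x, a x * (∫ y, ρK ε (x - y) ∂h0)) +
          ∑ i, ∫ x, A i x * pairSM (U0 i) (fun y => ρK ε (x - y)) : ℝ))
        (nhdsWithin 0 (Set.Ioi 0))
        (nhds ((∫ x, a x ∂h0) + ∑ i, pairSM (U0 i) ⇑(A i))) :=
      (hconvh a).add (tendsto_finset_sum _ fun i _ => hconvU i (A i))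
    have convE : Filter.Tendsto
        (fun ε => (((∫ x, a x * (∫ y, ρK ε (x - y) ∂h0)) +
          ∑ i, ∫ x, A i x * pairSM (U0 i) (fun y => ρK ε (x - y)) : ℝ) : EReal))
        (nhdsWithin 0 (Set.Ioi 0))
        (nhds (((∫ x, a x ∂h0) + ∑ i, pairSM (U0 i) ⇑(A i) : ℝ) : EReal)) :=
      (continuous_coe_real_ereal.tendsto _).comp conv
    filter_upwards [convE.eventually (eventually_gt_nhds hbr)] with ε hε
    exact hε.trans_le (le_sSup ⟨a, A, hadm, rfl⟩)
  · -- upper bound: Lam_ε ≤ Lam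
    intro b hb
    filter_upwards [Ioo_mem_nhdsGT_of_mem (Set.left_mem_Ico.mpr one_pos)] with ε hε
    refine lt_of_le_of_lt ?_ hb
    refine sSup_le ?_
    rintro r ⟨a, A, hadm, rfl⟩
    have hρ0 : ∀ x, 0 ≤ ρK ε x := fun x => (hpos ε hε x).le
    have hm := hmass ε hε
    have e1 : ∫ x, a x * (∫ y, ρK ε (x - y) ∂h0) = ∫ y, mollC (ρK ε) a y ∂h0 :=
      moll_pair (ρK ε) a h0
    have e2 : ∀ i : Fin 4, ∫ x, A i x * pairSM (U0 i) (fun y => ρK ε (x - y)) =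
        pairSM (U0 i) ⇑(mollC (ρK ε) (A i)) := fun i => moll_pairSM (ρK ε) (A i) (U0 i)
    refine le_sSup ?_
    refine ⟨mollC (ρK ε) a, fun i => mollC (ρK ε) (A i),
      moll_adm (ρK ε) hρ0 hm a A hadm, ?_⟩
    have hreal : (∫ x, a x * (∫ y, ρK ε (x - y) ∂h0)) +
        (∑ i, ∫ x, A i x * pairSM (U0 i) (fun y => ρK ε (x - y))) =
        (∫ x, mollC (ρK ε) a x ∂h0) +
        ∑ i, pairSM (U0 i) ⇑(mollC (ρK ε) (A i)) := by
      rw [e1]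
      exact congrArg _ (Finset.sum_congr rfl fun i _ => e2 i)
    exact congrArg Real.toEReal hreal
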